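/- arXiv:2303.09204 — 2 statements merged into one kernel-verified Lean document; each statement's English description precedes it below -/
import Mathlib

section
/- Let f, g ∈ ℤ[x] be monic of the same degree whose roots can be put in a bijection such that corresponding roots differ by a (rational) integer and have equal multiplicities. Then there exists n₀ ∈ ℕ and a rational function r ∈ ℚ(x) such that ∏_{k=1}^n g(k)/f(k) = r(n) for all n ≥ n₀, where f has no non-negative integer roots and g has no positive integer roots. -/
open Polynomial Finset

private lemma swap_prod {ι κ M : Type*} [CommMonoid M] (s : Finset ι) (T : Multiset κ)
    (h : κ → ι → M) :
    ∏ i ∈ s, (T.map fun q => h q i).prod = (T.map fun q => ∏ i ∈ s, h q i).prod := by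
  induction T using Multiset.induction with
  | empty => simp
  | cons a t ih => simp [Finset.prod_mul_distrib, ih]

private lemma prod_Ioc_split {M : Type*} [CommMonoid M] (h : ℤ → M) {a b c : ℤ}
    (hab : a ≤ b) (hbc : b ≤ c) :
    (∏ j ∈ Finset.Ioc a b, h j) * ∏ j ∈ Finset.Ioc b c, h j = ∏ j ∈ Finset.Ioc a c, h j := by
  have hd : Disjoint (Finset.Ioc a b) (Finset.Ioc b c) := by
    simp only [Finset.disjoint_left, Finset.mem_Ioc]
    intro x h1 h2; omega
  rw [← Finset.Ioc_union_Ioc_eq_Ioc hab hbc, Finset.prod_union hd]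

private lemma prod_int_of_nat {M : Type*} [CommMonoid M] (n : ℕ) (h : ℤ → M) :
    ∏ k ∈ Finset.Icc 1 n, h (k : ℤ) = ∏ j ∈ Finset.Ioc (0:ℤ) (n:ℤ), h j := by
  have himg : (Finset.Icc 1 n).image (Nat.cast : ℕ → ℤ) = Finset.Ioc (0:ℤ) (n:ℤ) := by
    ext a
    simp only [Finset.mem_image, Finset.mem_Icc, Finset.mem_Ioc]
    constructor
    · rintro ⟨k, ⟨h1, h2⟩, rfl⟩; omega
    · intro ⟨h1, h2⟩; exact ⟨a.toNat, by omega, by omega⟩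
  rw [← himg, Finset.prod_image]
  intro a _ b _ hab
  exact_mod_cast hab

private lemma prod_Ioc_sub {M : Type*} [CommMonoid M] (h : ℤ → M) (n : ℤ) (N : ℕ) :
    ∏ j ∈ Finset.Ioc (n - N) n, h j = ∏ i ∈ Finset.range N, h (n - i) := by
  induction N with
  | zero => simp
  | succ m ih =>
    have h1 : (∏ j ∈ Finset.Ioc (n - ((m:ℤ)+1)) (n - m), h j) * ∏ j ∈ Finset.Ioc (n - (m:ℤ)) n, h j
        = ∏ j ∈ Finset.Ioc (n - ((m:ℤ)+1)) n, h j := prod_Ioc_split _ (by omega) (by omega)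
    have h2 : Finset.Ioc (n - ((m:ℤ)+1)) (n - m) = {n - m} := by
      ext x; simp only [Finset.mem_Ioc, Finset.mem_singleton]; omega
    rw [Finset.prod_range_succ, ← ih, show ((m+1 : ℕ):ℤ) = (m:ℤ)+1 by push_cast; ring, ← h1, h2,
      Finset.prod_singleton, mul_comm]

private lemma telescope (α : ℂ) (c : ℤ) (N : ℕ) (hc : c.natAbs ≤ N)
    (hα : ∀ j : ℤ, 0 < j → α ≠ (j:ℂ))
    (n : ℕ) (hn : 2 * N ≤ n) :
    (∏ j ∈ Finset.Ioc (-c) ((n:ℤ) - c), ((j:ℂ) - α)) / (∏ j ∈ Finset.Ioc (0:ℤ) (n:ℤ), ((j:ℂ) - α))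
    = ((∏ j ∈ Finset.Ioc (-c) (0:ℤ), ((j:ℂ) - α)) / (∏ j ∈ Finset.Ioc (0:ℤ) (-c), ((j:ℂ) - α)))
      * (∏ j ∈ Finset.Ioc ((n:ℤ) - N) ((n:ℤ) - c), ((j:ℂ) - α))
      / (∏ j ∈ Finset.Ioc ((n:ℤ) - N) (n:ℤ), ((j:ℂ) - α)) := by
  have hc' : (c.natAbs : ℤ) ≤ (N:ℤ) := by exact_mod_cast hc
  have hn' : 2 * (N:ℤ) ≤ (n:ℤ) := by exact_mod_cast hn
  have hne : ∀ a b : ℤ, 0 ≤ a → (∏ j ∈ Finset.Ioc a b, ((j:ℂ) - α)) ≠ 0 := by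
    intro a b ha
    rw [Finset.prod_ne_zero_iff]
    intro j hj
    rw [Finset.mem_Ioc] at hj
    have hj' : α ≠ (j:ℂ) := hα j (by omega)
    intro h0
    exact hj' (by linear_combination -h0)
  rcases le_or_gt 0 c with hc0 | hc0
  · have h4 : Finset.Ioc (0:ℤ) (-c) = ∅ := Finset.Ioc_eq_empty (by omega)
    have e1 : (∏ j ∈ Finset.Ioc (-c) (0:ℤ), ((j:ℂ)-α)) * ∏ j ∈ Finset.Ioc (0:ℤ) ((n:ℤ)-N), ((j:ℂ)-α)
        = ∏ j ∈ Finset.Ioc (-c) ((n:ℤ)-N), ((j:ℂ)-α) := prod_Ioc_split _ (by omega) (by omega)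
    have e2 : (∏ j ∈ Finset.Ioc (-c) ((n:ℤ)-N), ((j:ℂ)-α)) * ∏ j ∈ Finset.Ioc ((n:ℤ)-N) ((n:ℤ)-c), ((j:ℂ)-α)
        = ∏ j ∈ Finset.Ioc (-c) ((n:ℤ)-c), ((j:ℂ)-α) := prod_Ioc_split _ (by omega) (by omega)
    have e3 : (∏ j ∈ Finset.Ioc (0:ℤ) ((n:ℤ)-N), ((j:ℂ)-α)) * ∏ j ∈ Finset.Ioc ((n:ℤ)-N) (n:ℤ), ((j:ℂ)-α)
        = ∏ j ∈ Finset.Ioc (0:ℤ) (n:ℤ), ((j:ℂ)-α) := prod_Ioc_split _ (by omega) (by omega)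
    rw [h4, Finset.prod_empty, ← e3, ← e2, ← e1]
    have hP := hne 0 ((n:ℤ)-N) le_rfl
    have hY := hne ((n:ℤ)-N) (n:ℤ) (by omega)
    field_simp
  · have h4 : Finset.Ioc (-c) (0:ℤ) = ∅ := Finset.Ioc_eq_empty (by omega)
    have e1 : (∏ j ∈ Finset.Ioc (0:ℤ) (-c), ((j:ℂ)-α)) * ∏ j ∈ Finset.Ioc (-c) ((n:ℤ)-N), ((j:ℂ)-α)
        = ∏ j ∈ Finset.Ioc (0:ℤ) ((n:ℤ)-N), ((j:ℂ)-α) := prod_Ioc_split _ (by omega) (by omega)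
    have e2 : (∏ j ∈ Finset.Ioc (-c) ((n:ℤ)-N), ((j:ℂ)-α)) * ∏ j ∈ Finset.Ioc ((n:ℤ)-N) ((n:ℤ)-c), ((j:ℂ)-α)
        = ∏ j ∈ Finset.Ioc (-c) ((n:ℤ)-c), ((j:ℂ)-α) := prod_Ioc_split _ (by omega) (by omega)
    have e3 : (∏ j ∈ Finset.Ioc (0:ℤ) ((n:ℤ)-N), ((j:ℂ)-α)) * ∏ j ∈ Finset.Ioc ((n:ℤ)-N) (n:ℤ), ((j:ℂ)-α)
        = ∏ j ∈ Finset.Ioc (0:ℤ) (n:ℤ), ((j:ℂ)-α) := prod_Ioc_split _ (by omega) (by omega)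
    rw [h4, Finset.prod_empty, ← e3, ← e2, ← e1]
    have hP := hne (-c) ((n:ℤ)-N) (by omega)
    have hY := hne ((n:ℤ)-N) (n:ℤ) (by omega)
    have hK := hne 0 (-c) le_rfl
    field_simp

private lemma rat_poly_of_complex (W : Polynomial ℂ) (r : ℕ → ℚ) (n₀ : ℕ)
    (h : ∀ n : ℕ, n₀ ≤ n → W.eval ((n : ℕ) : ℂ) = ((r n : ℚ) : ℂ)) :
    ∃ P : Polynomial ℚ, ∀ n : ℕ, n₀ ≤ n → P.eval ((n : ℕ) : ℚ) = r n := by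
  classical
  set d := W.natDegree with hd
  set s : Finset ℕ := Finset.Icc n₀ (n₀ + d) with hs
  have hinj : Set.InjOn (fun i : ℕ => (i : ℚ)) s := fun a _ b _ hab => Nat.cast_injective hab
  set P : Polynomial ℚ := Lagrange.interpolate s (fun i => (i : ℚ)) r with hP
  have hcard : s.card = d + 1 := by simp only [hs, Nat.card_Icc]; omega
  have hPd : P.natDegree ≤ d := by
    by_cases h0 : P = 0
    · simp [h0]
    · have := Lagrange.degree_interpolate_lt r hinj
      rw [hcard] at this
      have h2 := (Polynomial.natDegree_lt_iff_degree_lt h0).2 (by exact_mod_cast this)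
      omega
  have hnode : ∀ i ∈ s, P.eval (i : ℚ) = r i := fun i hi =>
    Lagrange.eval_interpolate_at_node r hinj hi
  have hWP : W = P.map (algebraMap ℚ ℂ) := by
    have hz : W - P.map (algebraMap ℚ ℂ) = 0 := by
      apply Polynomial.eq_zero_of_natDegree_lt_card_of_eval_eq_zero _
        (f := fun i : {x // x ∈ s} => ((i : ℕ) : ℂ))
      · intro a b hab
        have : ((a : ℕ) : ℂ) = ((b : ℕ) : ℂ) := hab
        have : (a : ℕ) = (b : ℕ) := by exact_mod_cast this
        exact Subtype.ext this
      · intro i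
        have hi : n₀ ≤ (i : ℕ) ∧ (i : ℕ) ≤ n₀ + d := Finset.mem_Icc.mp i.2
        have h1 : W.eval ((i : ℕ) : ℂ) = ((r i : ℚ) : ℂ) := h _ hi.1
        have h2 : (P.map (algebraMap ℚ ℂ)).eval ((i : ℕ) : ℂ) = ((P.eval ((i : ℕ) : ℚ) : ℚ) : ℂ) := by
          rw [Polynomial.eval_map, Polynomial.eval₂_at_natCast]
          rfl
        simp only [Polynomial.eval_sub]
        rw [h1, h2, hnode _ i.2, sub_self]
      · have hmap : (P.map (algebraMap ℚ ℂ)).natDegree ≤ d :=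
          le_trans Polynomial.natDegree_map_le hPd
        have hsub := Polynomial.natDegree_sub_le W (P.map (algebraMap ℚ ℂ))
        have : Fintype.card {x // x ∈ s} = d + 1 := by
          rw [Fintype.card_coe, hcard]
        omega
    exact sub_eq_zero.mp hz
  refine ⟨P, fun n hn => ?_⟩
  have h1 : W.eval ((n : ℕ) : ℂ) = ((r n : ℚ) : ℂ) := h n hn
  rw [hWP, Polynomial.eval_map, Polynomial.eval₂_at_natCast] at h1
  have : ((P.eval ((n : ℕ) : ℚ) : ℚ) : ℂ) = ((r n : ℚ) : ℂ) := h1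
  exact_mod_cast this
/-- If the roots of monic `f, g ∈ ℤ[x]` of equal degree can be matched in a bijection
(encoded by the multiset `T` of pairs (root of f, integer shift)) so that corresponding
roots differ by a rational integer and have equal multiplicities, then the hypergeometric
product `∏_{k=1}^n g(k)/f(k)` is eventually given by a rational function of `n`. -/
theorem stmt11 (f g : Polynomial ℤ) (hfm : f.Monic) (hgm : g.Monic)
    (hdeg : f.degree = g.degree)
    (hf : ∀ k : ℕ, f.eval (k : ℤ) ≠ 0) (hg : ∀ k : ℕ, 1 ≤ k → g.eval (k : ℤ) ≠ 0)
    (T : Multiset (ℂ × ℤ))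
    (hfr : f.aroots ℂ = T.map Prod.fst)
    (hgr : g.aroots ℂ = T.map (fun q => q.1 + (q.2 : ℂ))) :
    ∃ (n₀ : ℕ) (P Q : Polynomial ℚ), Q ≠ 0 ∧ ∀ n : ℕ, n₀ ≤ n →
      (∏ k ∈ Finset.Icc 1 n, ((g.eval (k : ℤ) : ℤ) : ℚ) / ((f.eval (k : ℤ) : ℤ) : ℚ)) =
        P.eval (n : ℚ) / Q.eval (n : ℚ) := by
  classical
  have hNb : ∀ q ∈ T, q.2.natAbs ≤ (T.map fun q => q.2.natAbs).sum := by
    intro q hq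
    obtain ⟨t, rfl⟩ := Multiset.exists_cons_of_mem hq
    simp
  set N : ℕ := (T.map fun q => q.2.natAbs).sum with hNdef
  set fC := f.map (algebraMap ℤ ℂ) with hfCdef
  set gC := g.map (algebraMap ℤ ℂ) with hgCdef
  have hfroots : fC.roots = T.map Prod.fst := by
    rw [hfCdef, ← Polynomial.aroots_def]; exact hfr
  have hgroots : gC.roots = T.map (fun q => q.1 + (q.2 : ℂ)) := by
    rw [hgCdef, ← Polynomial.aroots_def]; exact hgr
  have hfev : ∀ x : ℂ, fC.eval x = (T.map fun q => x - q.1).prod := by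
    intro x
    have hsp : fC = (fC.roots.map fun a => Polynomial.X - Polynomial.C a).prod :=
      (IsAlgClosed.splits _).eq_prod_roots_of_monic (hfm.map _)
    rw [hsp, hfroots, Multiset.map_map, Polynomial.eval_multiset_prod, Multiset.map_map]
    simp [Function.comp]
  have hgev : ∀ x : ℂ, gC.eval x = (T.map fun q => x - (q.1 + q.2)).prod := by
    intro x
    have hsp : gC = (gC.roots.map fun a => Polynomial.X - Polynomial.C a).prod :=
      (IsAlgClosed.splits _).eq_prod_roots_of_monic (hgm.map _)
    rw [hsp, hgroots, Multiset.map_map, Polynomial.eval_multiset_prod, Multiset.map_map]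
    simp [Function.comp]
  have hfcast : ∀ j : ℤ, ((f.eval j : ℤ) : ℂ) = fC.eval ((j : ℤ) : ℂ) := by
    intro j
    rw [hfCdef, algebraMap_int_eq, Polynomial.eval_intCast_map]
    simp
  have hgcast : ∀ j : ℤ, ((g.eval j : ℤ) : ℂ) = gC.eval ((j : ℤ) : ℂ) := by
    intro j
    rw [hgCdef, algebraMap_int_eq, Polynomial.eval_intCast_map]
    simp
  have hα : ∀ q ∈ T, ∀ j : ℤ, 0 ≤ j → q.1 ≠ (j : ℂ) := by
    intro q hq j hj heq
    have h1 : fC.eval ((j : ℤ) : ℂ) = 0 := by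
      rw [hfev]
      apply Multiset.prod_eq_zero
      refine Multiset.mem_map.2 ⟨q, hq, ?_⟩
      rw [heq, sub_self]
    rw [← hfcast] at h1
    have h3 : f.eval j = 0 := by exact_mod_cast h1
    have h4 := hf j.toNat
    rw [show ((j.toNat : ℕ) : ℤ) = j by omega] at h4
    exact h4 h3
  -- the denominator polynomial
  set QQ : Polynomial ℚ :=
    ∏ i ∈ Finset.range N, (f.map (Int.castRingHom ℚ)).comp (Polynomial.X - Polynomial.C (i : ℚ))
    with hQQdef
  have hQev : ∀ n : ℕ, QQ.eval ((n : ℕ) : ℚ)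
      = ∏ j ∈ Finset.Ioc ((n : ℤ) - N) (n : ℤ), ((f.eval j : ℤ) : ℚ) := by
    intro n
    rw [hQQdef, Polynomial.eval_prod, prod_Ioc_sub (fun j => ((f.eval j : ℤ) : ℚ)) (n : ℤ) N]
    apply Finset.prod_congr rfl
    intro i _
    rw [Polynomial.eval_comp, Polynomial.eval_sub, Polynomial.eval_X, Polynomial.eval_C]
    rw [show ((n : ℚ) - (i : ℚ)) = (((n : ℤ) - (i : ℤ) : ℤ) : ℚ) by push_cast; ring,
      Polynomial.eval_intCast_map]
    simp
  have hQne : ∀ n : ℕ, N ≤ n → QQ.eval ((n : ℕ) : ℚ) ≠ 0 := by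
    intro n hn
    have hn' : (N : ℤ) ≤ (n : ℤ) := by exact_mod_cast hn
    rw [hQev, Finset.prod_ne_zero_iff]
    intro j hj
    rw [Finset.mem_Ioc] at hj
    intro h0
    have h3 : f.eval j = 0 := by exact_mod_cast h0
    have h4 := hf j.toNat
    rw [show ((j.toNat : ℕ) : ℤ) = j by omega] at h4
    exact h4 h3
  have hQQ0 : QQ ≠ 0 := by
    intro h0
    exact hQne N le_rfl (by rw [h0]; simp)
  -- the numerator data
  set K : ℂ := (T.map fun q =>
      (∏ j ∈ Finset.Ioc (-q.2) (0 : ℤ), ((j : ℂ) - q.1))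
        / (∏ j ∈ Finset.Ioc (0 : ℤ) (-q.2), ((j : ℂ) - q.1))).prod with hKdef
  set W₀ : Polynomial ℂ := (T.map fun q =>
      ∏ j ∈ Finset.Ioc (-(N : ℤ)) (-q.2), (Polynomial.X - Polynomial.C (q.1 - (j : ℂ)))).prod
    with hW0def
  set W : Polynomial ℂ := Polynomial.C K * W₀ with hWdef
  have hW0ev : ∀ n : ℕ, W₀.eval ((n : ℕ) : ℂ) = (T.map fun q =>
      ∏ j ∈ Finset.Ioc ((n : ℤ) - N) ((n : ℤ) - q.2), ((j : ℂ) - q.1)).prod := by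
    intro n
    rw [hW0def, Polynomial.eval_multiset_prod, Multiset.map_map]
    apply congrArg Multiset.prod
    apply Multiset.map_congr rfl
    intro q _
    rw [Function.comp_apply, Polynomial.eval_prod]
    rw [show Finset.Ioc ((n : ℤ) - N) ((n : ℤ) - q.2)
        = Finset.map (addLeftEmbedding (n : ℤ)) (Finset.Ioc (-(N : ℤ)) (-q.2)) by
      rw [Finset.map_add_left_Ioc]; congr 1 <;> ring]
    rw [Finset.prod_map]
    apply Finset.prod_congr rfl
    intro j _
    simp only [addLeftEmbedding_apply, Polynomial.eval_sub, Polynomial.eval_X, Polynomial.eval_C]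
    push_cast
    ring
  -- the main evaluation identity
  have hmain : ∀ n : ℕ, 2 * N ≤ n → W.eval ((n : ℕ) : ℂ) =
      ((((∏ k ∈ Finset.Icc 1 n, ((g.eval (k : ℤ) : ℤ) : ℚ) / ((f.eval (k : ℤ) : ℤ) : ℚ))
        * QQ.eval ((n : ℕ) : ℚ) : ℚ)) : ℂ) := by
    intro n hn
    have hNn : N ≤ n := by omega
    have s1 : (((∏ k ∈ Finset.Icc 1 n, ((g.eval (k : ℤ) : ℤ) : ℚ) / ((f.eval (k : ℤ) : ℤ) : ℚ)) : ℚ) : ℂ)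
        = ∏ j ∈ Finset.Ioc (0 : ℤ) (n : ℤ), (((g.eval j : ℤ) : ℂ) / ((f.eval j : ℤ) : ℂ)) := by
      push_cast
      rw [prod_int_of_nat n (fun j => ((g.eval j : ℤ) : ℂ) / ((f.eval j : ℤ) : ℂ))]
    have s2 : ∀ j : ℤ, ((g.eval j : ℤ) : ℂ) / ((f.eval j : ℤ) : ℂ)
        = (T.map fun q => ((j : ℂ) - (q.1 + q.2)) / ((j : ℂ) - q.1)).prod := by
      intro j
      rw [Multiset.prod_map_div, hfcast, hgcast, hfev, hgev]
    have s4 : ∀ q ∈ T, (∏ j ∈ Finset.Ioc (0 : ℤ) (n : ℤ), ((j : ℂ) - (q.1 + q.2)) / ((j : ℂ) - q.1))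
        = ((∏ j ∈ Finset.Ioc (-q.2) (0 : ℤ), ((j : ℂ) - q.1))
            / (∏ j ∈ Finset.Ioc (0 : ℤ) (-q.2), ((j : ℂ) - q.1)))
          * (∏ j ∈ Finset.Ioc ((n : ℤ) - N) ((n : ℤ) - q.2), ((j : ℂ) - q.1))
          / (∏ j ∈ Finset.Ioc ((n : ℤ) - N) (n : ℤ), ((j : ℂ) - q.1)) := by
      intro q hq
      rw [Finset.prod_div_distrib]
      have hrein : (∏ j ∈ Finset.Ioc (0 : ℤ) (n : ℤ), ((j : ℂ) - (q.1 + q.2)))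
          = ∏ j ∈ Finset.Ioc (-q.2) ((n : ℤ) - q.2), ((j : ℂ) - q.1) := by
        rw [show Finset.Ioc (-q.2) ((n : ℤ) - q.2)
            = Finset.map (addRightEmbedding (-q.2)) (Finset.Ioc (0 : ℤ) (n : ℤ)) by
          rw [Finset.map_add_right_Ioc]; congr 1 <;> ring]
        rw [Finset.prod_map]
        apply Finset.prod_congr rfl
        intro j _
        simp only [addRightEmbedding_apply]
        push_cast
        ring
      rw [hrein]
      exact telescope q.1 q.2 N (hNb q hq) (fun j hj => hα q hq j (le_of_lt hj)) n hn
    have hden : (T.map fun q => ∏ j ∈ Finset.Ioc ((n : ℤ) - N) (n : ℤ), ((j : ℂ) - q.1)).prod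
        = ((QQ.eval ((n : ℕ) : ℚ) : ℚ) : ℂ) := by
      rw [← swap_prod, hQev]
      push_cast
      apply Finset.prod_congr rfl
      intro j _
      exact (hfev _).symm.trans (hfcast j).symm
    have hcast : (((∏ k ∈ Finset.Icc 1 n, ((g.eval (k : ℤ) : ℤ) : ℚ) / ((f.eval (k : ℤ) : ℤ) : ℚ)) : ℚ) : ℂ)
        = K * W₀.eval ((n : ℕ) : ℂ) / ((QQ.eval ((n : ℕ) : ℚ) : ℚ) : ℂ) := by
      rw [s1]
      rw [Finset.prod_congr rfl (fun j _ => s2 j)]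
      rw [swap_prod]
      rw [Multiset.map_congr rfl s4]
      have : (T.map fun q =>
          ((∏ j ∈ Finset.Ioc (-q.2) (0 : ℤ), ((j : ℂ) - q.1))
            / (∏ j ∈ Finset.Ioc (0 : ℤ) (-q.2), ((j : ℂ) - q.1)))
          * (∏ j ∈ Finset.Ioc ((n : ℤ) - N) ((n : ℤ) - q.2), ((j : ℂ) - q.1))
          / (∏ j ∈ Finset.Ioc ((n : ℤ) - N) (n : ℤ), ((j : ℂ) - q.1))).prod
          = K * W₀.eval ((n : ℕ) : ℂ) / ((QQ.eval ((n : ℕ) : ℚ) : ℚ) : ℂ) := by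
        rw [Multiset.prod_map_div, Multiset.prod_map_mul, hW0ev, hden, hKdef]
      exact this
    have hQc : ((QQ.eval ((n : ℕ) : ℚ) : ℚ) : ℂ) ≠ 0 := by
      rw [Rat.cast_ne_zero]
      exact hQne n hNn
    rw [hWdef, Polynomial.eval_mul, Polynomial.eval_C, Rat.cast_mul, hcast,
      div_mul_cancel₀ _ hQc]
  obtain ⟨P, hPev⟩ := rat_poly_of_complex W
    (fun n => (∏ k ∈ Finset.Icc 1 n, ((g.eval (k : ℤ) : ℤ) : ℚ) / ((f.eval (k : ℤ) : ℤ) : ℚ))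
      * QQ.eval ((n : ℕ) : ℚ)) (2 * N) hmain
  refine ⟨2 * N, P, QQ, hQQ0, fun n hn => ?_⟩
  have h1 := hPev n hn
  have h2 := hQne n (by omega)
  rw [eq_div_iff h2]
  exact h1.symm
end

section
/- Let u_n be defined by u_0 = 1 and f(n)u_n = g(n)u_{n-1} with f(x) = (x²+1)(x²-2) and g(x) = x⁴ - 2x² + 9. Then v_7(u_n) = -v_7(∏_{k=1}^n f(k)) and in particular v_7(u_n) ≤ -(2n/6 - 10·log n/log 7) for all n ≥ 2; consequently, for any fixed t ∈ ℚ, u_n = t holds for only finitely many n. -/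
open Finset

private lemma Gz_not_dvd (k : ℕ) : ¬ (7:ℤ) ∣ ((k:ℤ)^4 - 2*(k:ℤ)^2 + 9) := by
  intro h
  have : ((k:ℤ)^4 - 2*(k:ℤ)^2 + 9 : ZMod 7) = 0 := by
    have := (ZMod.intCast_zmod_eq_zero_iff_dvd _ 7).2 h
    simp only [Int.cast_add, Int.cast_sub, Int.cast_mul, Int.cast_pow, Int.cast_natCast,
      Int.cast_ofNat] at this ⊢
    exact this
  revert this
  have : ∀ x : ZMod 7, x^4 - 2*x^2 + 9 ≠ 0 := by decide
  exact this _

private lemma Gz_ne (k : ℕ) : ((k:ℤ)^4 - 2*(k:ℤ)^2 + 9) ≠ 0 := by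
  intro h; exact Gz_not_dvd k (h ▸ dvd_zero 7)

private lemma Fz_ne (k : ℕ) : (((k:ℤ)^2 + 1) * ((k:ℤ)^2 - 2)) ≠ 0 := by
  have h1 : ((k:ℤ)^2 + 1) ≠ 0 := by positivity
  have h2 : ((k:ℤ)^2 - 2) ≠ 0 := by
    intro h
    have h2 : (k:ℤ)^2 = 2 := by linarith
    have : (k*k : ℤ) = 2 := by nlinarith
    rcases Nat.lt_or_ge k 2 with hk | hk
    · interval_cases k <;> simp_all
    · have : (2:ℤ) ≤ k := by exact_mod_cast hk
      nlinarith
  exact mul_ne_zero h1 h2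

private lemma u_eq (u : ℕ → ℚ) (hu0 : u 0 = 1)
    (hrec : ∀ n : ℕ, 1 ≤ n →
      (((n : ℚ) ^ 2 + 1) * ((n : ℚ) ^ 2 - 2)) * u n =
        ((n : ℚ) ^ 4 - 2 * (n : ℚ) ^ 2 + 9) * u (n - 1)) :
    ∀ n : ℕ, u n = ((∏ k ∈ Finset.Icc 1 n, ((k:ℤ)^4 - 2*(k:ℤ)^2 + 9) : ℤ) : ℚ) /
      ((∏ k ∈ Finset.Icc 1 n, ((k:ℤ)^2 + 1) * ((k:ℤ)^2 - 2) : ℤ) : ℚ) := by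
  intro n
  induction n with
  | zero => simp [hu0]
  | succ m ih =>
    have hrecm := hrec (m+1) (by omega)
    simp only [Nat.add_sub_cancel] at hrecm
    have hF : (((m+1 : ℕ) : ℚ) ^ 2 + 1) * (((m+1 : ℕ) : ℚ) ^ 2 - 2) ≠ 0 := by
      have := Fz_ne (m+1); push_cast at this ⊢; exact_mod_cast this
    have hprod : ∀ (h : ℕ → ℤ), (∏ k ∈ Finset.Icc 1 (m+1), h k) =
        (∏ k ∈ Finset.Icc 1 m, h k) * h (m+1) := by
      intro h; rw [Finset.prod_Icc_succ_top (by omega)]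
    rw [hprod, hprod]
    have hQ : ((∏ k ∈ Finset.Icc 1 m, ((k:ℤ)^2 + 1) * ((k:ℤ)^2 - 2) : ℤ) : ℚ) ≠ 0 := by
      exact_mod_cast Finset.prod_ne_zero_iff.2 fun k _ => Fz_ne k
    have := hrecm
    rw [ih] at this
    rw [mul_div_assoc', eq_div_iff hQ] at this
    push_cast
    rw [eq_div_iff (by push_cast at hQ hF ⊢; exact mul_ne_zero hQ hF)]
    push_cast at this
    linear_combination this

private lemma part1 (u : ℕ → ℚ) (hu0 : u 0 = 1)
    (hrec : ∀ n : ℕ, 1 ≤ n →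
      (((n : ℚ) ^ 2 + 1) * ((n : ℚ) ^ 2 - 2)) * u n =
        ((n : ℚ) ^ 4 - 2 * (n : ℚ) ^ 2 + 9) * u (n - 1)) (n : ℕ) :
    padicValRat 7 (u n) =
      -(padicValInt 7 (∏ k ∈ Finset.Icc 1 n, ((k : ℤ) ^ 2 + 1) * ((k : ℤ) ^ 2 - 2)) : ℤ) := by
  haveI : Fact (Nat.Prime 7) := ⟨by norm_num⟩
  have hP : (∏ k ∈ Finset.Icc 1 n, ((k:ℤ)^4 - 2*(k:ℤ)^2 + 9) : ℤ) ≠ 0 :=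
    Finset.prod_ne_zero_iff.2 fun k _ => Gz_ne k
  have hQ : (∏ k ∈ Finset.Icc 1 n, ((k:ℤ)^2 + 1) * ((k:ℤ)^2 - 2) : ℤ) ≠ 0 :=
    Finset.prod_ne_zero_iff.2 fun k _ => Fz_ne k
  have hPv : padicValInt 7 (∏ k ∈ Finset.Icc 1 n, ((k:ℤ)^4 - 2*(k:ℤ)^2 + 9)) = 0 := by
    apply padicValInt.eq_zero_of_not_dvd
    intro h
    have h7 : Prime (7:ℤ) := Int.prime_iff_natAbs_prime.2 (by norm_num)
    obtain ⟨k, -, hk⟩ := h7.exists_mem_finset_dvd h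
    exact Gz_not_dvd k hk
  rw [u_eq u hu0 hrec n, padicValRat.div (p := 7) (by exact_mod_cast hP) (by exact_mod_cast hQ),
    padicValRat.of_int, padicValRat.of_int, hPv]
  simp

private lemma hensel : ∀ j : ℕ, ∃ r : ℤ, (7:ℤ)^(j+1) ∣ r^2 - 2 ∧ ¬ (7:ℤ) ∣ r := by
  intro j
  induction j with
  | zero => exact ⟨3, by norm_num, by norm_num⟩
  | succ j ih =>
    obtain ⟨r, ⟨m, hm⟩, hr7⟩ := ih
    have h7 : Prime (7:ℤ) := Int.prime_iff_natAbs_prime.2 (by norm_num)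
    have hcop : IsCoprime (7:ℤ) (2*r) := by
      rw [h7.coprime_iff_not_dvd]
      intro hd
      rcases h7.dvd_mul.1 hd with h | h
      · norm_num at h
      · exact hr7 h
    obtain ⟨a, b, hab⟩ := hcop
    refine ⟨r + 7^(j+1) * (-m*b), ?_, ?_⟩
    · have key : (r + 7^(j+1) * (-m*b))^2 - 2 =
        7^(j+2) * (a*m) + 7^(2*j+2) * (m*b)^2 := by
        linear_combination hm - 7^(j+1) * m * hab
      rw [key]
      exact dvd_add (Dvd.intro _ rfl) ((pow_dvd_pow (7:ℤ) (by omega)).mul_right _)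
    · intro hdvd
      apply hr7
      have h1 : (7:ℤ) ∣ 7^(j+1) * (-m*b) := (dvd_pow_self 7 (Nat.succ_ne_zero j)).mul_right _
      have := dvd_sub hdvd h1
      simpa using this

private lemma nat_root (j : ℕ) (hj : 1 ≤ j) :
    ∃ r : ℕ, 1 ≤ r ∧ r < 7^j ∧ (7:ℤ)^j ∣ (r:ℤ)^2 - 2 := by
  obtain ⟨r, hdvd, hr7⟩ := hensel (j-1)
  rw [Nat.sub_add_cancel hj] at hdvd
  have hpos : (0:ℤ) < 7^j := by positivity
  set r0 : ℤ := r % 7^j with hr0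
  have h0le : 0 ≤ r0 := Int.emod_nonneg r (by positivity)
  have hlt : r0 < 7^j := Int.emod_lt_of_pos r hpos
  have hsub : (7:ℤ)^j ∣ r - r0 := by
    rw [hr0, Int.emod_def]; ring_nf; exact Dvd.intro _ (by ring)
  have hroot : (7:ℤ)^j ∣ r0^2 - 2 := by
    have h2 : (7:ℤ)^j ∣ r^2 - r0^2 := by
      have : r^2 - r0^2 = (r - r0) * (r + r0) := by ring
      rw [this]; exact hsub.mul_right _
    have := dvd_sub hdvd h2
    simpa using this
  have hne : r0 ≠ 0 := by
    intro h
    apply hr7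
    have : (7:ℤ)^j ∣ r := by simpa [h] using hsub
    exact dvd_trans (dvd_pow_self 7 (by omega)) this
  refine ⟨r0.toNat, by omega, ?_, ?_⟩
  · have : ((7:ℤ)^j) = ((7^j : ℕ) : ℤ) := by push_cast; ring
    omega
  · have : ((r0.toNat : ℤ)) = r0 := Int.toNat_of_nonneg h0le
    rw [this]; exact hroot

private lemma count_lemma (n j : ℕ) (hj : 1 ≤ j) :
    2 * (n / 7^j) ≤ ((Finset.Icc 1 n).filter (fun k : ℕ => (7:ℤ)^j ∣ (k:ℤ)^2 - 2)).card := by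
  obtain ⟨r, hr1, hrlt, hroot⟩ := nat_root j hj
  set q := n / 7^j with hq
  set r2 := 7^j - r with hr2
  have hodd : Odd (7^j) := Odd.pow ⟨3, by norm_num⟩
  have hrne : r ≠ r2 := by
    intro h
    have h2r : 2*r = 7^j := by omega
    rcases hodd with ⟨c, hc⟩
    omega
  have hroot2 : (7:ℤ)^j ∣ (r2:ℤ)^2 - 2 := by
    have hcast : (r2:ℤ) = 7^j - r := by
      have : ((7^j : ℕ):ℤ) = (7:ℤ)^j := by push_cast; ring
      omega
    have : (r2:ℤ)^2 - 2 = (7:ℤ)^j * (7^j - 2*r) + ((r:ℤ)^2 - 2) := by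
      rw [hcast]; ring
    rw [this]
    exact dvd_add (Dvd.intro _ rfl) hroot
  have hcard : (Finset.range q ×ˢ ({r, r2} : Finset ℕ)).card = 2 * q := by
    rw [Finset.card_product, Finset.card_range, Finset.card_insert_of_notMem (by simp [hrne]),
      Finset.card_singleton]
    ring
  rw [← hcard]
  apply Finset.card_le_card_of_injOn (fun p : ℕ × ℕ => p.1 * 7^j + p.2)
  · rintro ⟨i, s⟩ his
    simp only [Finset.mem_coe, Finset.mem_product, Finset.mem_range, Finset.mem_insert, Finset.mem_singleton] at his
    obtain ⟨hi, hs⟩ := his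
    have hs1 : 1 ≤ s := by rcases hs with h | h <;> omega
    have hslt : s < 7^j := by rcases hs with h | h <;> omega
    have hsroot : (7:ℤ)^j ∣ (s:ℤ)^2 - 2 := by rcases hs with h | h <;> (subst h; assumption)
    refine Finset.mem_filter.mpr ⟨Finset.mem_Icc.mpr ⟨?_, ?_⟩, ?_⟩
    · exact hs1.trans (Nat.le_add_left s (i * 7^j))
    · have h1 : (i+1) * 7^j ≤ q * 7^j := Nat.mul_le_mul_right _ (by omega)
      have h2 : q * 7^j ≤ n := Nat.div_mul_le_self n _
      calc i * 7^j + s ≤ i * 7^j + 7^j := Nat.add_le_add_left hslt.le _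
        _ = (i+1) * 7^j := by ring
        _ ≤ q * 7^j := h1
        _ ≤ n := h2
    · have hcast : ((i * 7^j + s : ℕ) : ℤ) = (i:ℤ) * 7^j + s := by push_cast; ring
      have hexp : ((i * 7^j + s : ℕ) : ℤ)^2 - 2 =
          (7:ℤ)^j * ((i:ℤ) * ((i:ℤ)*7^j + 2*s)) + ((s:ℤ)^2 - 2) := by
        rw [hcast]; ring
      rw [hexp]
      exact dvd_add (Dvd.intro _ rfl) hsroot
  · rintro ⟨i, s⟩ his ⟨i', s'⟩ his' heq
    simp only [Finset.mem_coe, Finset.mem_product, Finset.mem_range, Finset.mem_insert,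
      Finset.mem_singleton] at his his'
    have hslt : s < 7^j := by rcases his.2 with h | h <;> omega
    have hslt' : s' < 7^j := by rcases his'.2 with h | h <;> omega
    simp only at heq
    have h1 : (i * 7^j + s) % 7^j = s := by
      rw [Nat.add_comm, Nat.add_mul_mod_self_right, Nat.mod_eq_of_lt hslt]
    have h2 : (i' * 7^j + s') % 7^j = s' := by
      rw [Nat.add_comm, Nat.add_mul_mod_self_right, Nat.mod_eq_of_lt hslt']
    have h3 : (i * 7^j + s) % 7^j = (i' * 7^j + s') % 7^j := by rw [heq]
    rw [h1, h2] at h3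
    subst h3
    have h4 : i * 7^j = i' * 7^j := Nat.add_right_cancel heq
    have h5 : i = i' := Nat.eq_of_mul_eq_mul_right (by positivity) h4
    exact Prod.ext h5 rfl

private lemma sq2_ne (k : ℕ) : ((k:ℤ)^2 - 2) ≠ 0 := (mul_ne_zero_iff.1 (Fz_ne k)).2

private lemma val_lower (n J : ℕ) :
    ∑ j ∈ Finset.Icc 1 J, 2 * (n / 7^j) ≤
      padicValInt 7 (∏ k ∈ Finset.Icc 1 n, ((k:ℤ)^2 + 1) * ((k:ℤ)^2 - 2)) := by
  haveI : Fact (Nat.Prime 7) := ⟨by norm_num⟩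
  set c : ℕ → ℕ := fun k => ((Finset.Icc 1 J).filter (fun j : ℕ => (7:ℤ)^j ∣ (k:ℤ)^2 - 2)).card
    with hc
  have hck : ∀ k : ℕ, (7:ℤ)^(c k) ∣ (k:ℤ)^2 - 2 := by
    intro k
    have hle : c k ≤ padicValInt 7 ((k:ℤ)^2 - 2) := by
      have hsub : (Finset.Icc 1 J).filter (fun j : ℕ => (7:ℤ)^j ∣ (k:ℤ)^2 - 2) ⊆
          Finset.Icc 1 (padicValInt 7 ((k:ℤ)^2 - 2)) := by
        intro j hj
        simp only [Finset.mem_filter, Finset.mem_Icc] at hj ⊢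
        refine ⟨hj.1.1, ?_⟩
        have := (padicValInt_dvd_iff (p := 7) j ((k:ℤ)^2-2)).1 hj.2
        rcases this with h | h
        · exact absurd h (sq2_ne k)
        · exact h
      have := Finset.card_le_card hsub
      simpa using this
    exact dvd_trans (pow_dvd_pow 7 hle) (padicValInt_dvd _)
  have hdvd1 : (7:ℤ)^(∑ k ∈ Finset.Icc 1 n, c k) ∣
      ∏ k ∈ Finset.Icc 1 n, ((k:ℤ)^2 - 2) := by
    rw [← Finset.prod_pow_eq_pow_sum]
    exact Finset.prod_dvd_prod_of_dvd _ _ (fun k _ => hck k)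
  have hdvd2 : (∏ k ∈ Finset.Icc 1 n, ((k:ℤ)^2 - 2)) ∣
      ∏ k ∈ Finset.Icc 1 n, ((k:ℤ)^2 + 1) * ((k:ℤ)^2 - 2) :=
    Finset.prod_dvd_prod_of_dvd _ _ (fun k _ => Dvd.intro_left _ rfl)
  have hQ : (∏ k ∈ Finset.Icc 1 n, ((k:ℤ)^2 + 1) * ((k:ℤ)^2 - 2) : ℤ) ≠ 0 :=
    Finset.prod_ne_zero_iff.2 fun k _ => Fz_ne k
  have hval : ∑ k ∈ Finset.Icc 1 n, c k ≤
      padicValInt 7 (∏ k ∈ Finset.Icc 1 n, ((k:ℤ)^2 + 1) * ((k:ℤ)^2 - 2)) := by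
    have := (padicValInt_dvd_iff (p := 7) (∑ k ∈ Finset.Icc 1 n, c k) _).1
      (hdvd1.trans hdvd2)
    rcases this with h | h
    · exact absurd h hQ
    · exact h
  refine le_trans ?_ hval
  have hswap : ∑ k ∈ Finset.Icc 1 n, c k =
      ∑ j ∈ Finset.Icc 1 J, ((Finset.Icc 1 n).filter (fun k : ℕ => (7:ℤ)^j ∣ (k:ℤ)^2 - 2)).card := by
    simp only [hc, Finset.card_filter]
    exact Finset.sum_comm
  rw [hswap]
  exact Finset.sum_le_sum fun j hj => count_lemma n j (Finset.mem_Icc.1 hj).1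

private lemma geom_sum_Icc (J : ℕ) : ∑ j ∈ Finset.Icc 1 J, ((1:ℝ)/7)^j = (1 - (1/7)^J)/6 := by
  induction J with
  | zero => simp
  | succ J ih =>
    rw [Finset.sum_Icc_succ_top (by omega), ih]
    ring

private lemma floor_div_ge (n m : ℕ) (hm : 0 < m) : (n:ℝ)/m - 1 ≤ ((n / m : ℕ) : ℝ) := by
  have h1 : n < m * (n/m) + m := by
    have := Nat.div_add_mod n m
    have := Nat.mod_lt n hm
    omega
  have h2 : (n:ℝ) < m * ((n/m : ℕ):ℝ) + m := by exact_mod_cast h1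
  have hm' : (0:ℝ) < m := by exact_mod_cast hm
  rw [div_sub_one (by positivity), div_le_iff₀ hm']
  nlinarith

private lemma part2real (n : ℕ) (h2 : 2 ≤ n) :
    (n:ℝ)/3 - 10 * Real.log n / Real.log 7 ≤
      (padicValInt 7 (∏ k ∈ Finset.Icc 1 n, ((k:ℤ)^2 + 1) * ((k:ℤ)^2 - 2)) : ℝ) := by
  have hlog7 : (0:ℝ) < Real.log 7 := Real.log_pos (by norm_num)
  have hlogn : Real.log 2 ≤ Real.log n :=
    Real.log_le_log (by norm_num) (by exact_mod_cast h2)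
  rcases Nat.lt_or_ge n 7 with hn7 | hn7
  · -- small case: 2 ≤ n ≤ 6
    have hV : (0:ℝ) ≤ (padicValInt 7 (∏ k ∈ Finset.Icc 1 n, ((k:ℤ)^2 + 1) * ((k:ℤ)^2 - 2)) : ℝ) := by
      positivity
    have hlog32 : Real.log 7 ≤ 5 * Real.log 2 := by
      have : Real.log 7 ≤ Real.log 32 := Real.log_le_log (by norm_num) (by norm_num)
      have h32 : Real.log 32 = 5 * Real.log 2 := by
        rw [show (32:ℝ) = 2^5 by norm_num, Real.log_pow]
        push_cast; ring
      linarith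
    have hkey : 2 ≤ 10 * Real.log n / Real.log 7 := by
      rw [le_div_iff₀ hlog7]
      nlinarith [Real.log_pos (by norm_num : (1:ℝ) < 2)]
    have hn6 : (n:ℝ) ≤ 6 := by exact_mod_cast Nat.lt_succ_iff.mp hn7
    linarith
  · -- n ≥ 7
    set J := Nat.log 7 n with hJ
    have hJ1 : 1 ≤ J := Nat.one_le_iff_ne_zero.mpr (by
      intro h
      have := Nat.log_eq_zero_iff.1 h
      omega)
    have hpow_le : 7^J ≤ n := Nat.pow_log_le_self 7 (by omega)
    have hlt : n < 7^(J+1) := Nat.lt_pow_succ_log_self (by norm_num) n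
    have hVge : ∑ j ∈ Finset.Icc 1 J, 2 * (n / 7^j) ≤
        padicValInt 7 (∏ k ∈ Finset.Icc 1 n, ((k:ℤ)^2 + 1) * ((k:ℤ)^2 - 2)) := val_lower n J
    have hcast : ((∑ j ∈ Finset.Icc 1 J, 2 * (n / 7^j) : ℕ) : ℝ) =
        ((∑ j ∈ Finset.Icc 1 J, 2 * ((n / 7^j : ℕ):ℝ) : ℝ)) := by push_cast; ring
    have hsum_ge : ∑ j ∈ Finset.Icc 1 J, 2 * ((n / 7^j : ℕ):ℝ) ≥
        2 * (n:ℝ) * ((1 - (1/7)^J)/6) - 2*J := by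
      have h1 : ∀ j ∈ Finset.Icc 1 J, 2 * ((n:ℝ) * (1/7)^j) - 2 ≤ 2 * ((n / 7^j : ℕ):ℝ) := by
        intro j hj
        have h := floor_div_ge n (7^j) (by positivity)
        have hp : ((7^j : ℕ):ℝ) = (7:ℝ)^j := by push_cast; ring
        rw [hp] at h
        have heq : (n:ℝ) * (1/7)^j = (n:ℝ)/(7:ℝ)^j := by
          rw [one_div, inv_pow, div_eq_mul_inv]
        rw [heq]
        linarith
      have h2 := Finset.sum_le_sum h1
      have h3 : ∑ j ∈ Finset.Icc 1 J, (2 * ((n:ℝ) * (1/7)^j) - 2) =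
          2 * (n:ℝ) * ((1 - (1/7)^J)/6) - 2*J := by
        rw [Finset.sum_sub_distrib, Finset.sum_const, Nat.card_Icc]
        simp only [← Finset.mul_sum, ← mul_assoc]
        rw [geom_sum_Icc]
        simp
        ring
      linarith
    have hnJ : (n:ℝ) * (1/7)^J ≤ 7 := by
      have h1 : (n:ℝ) < 7^(J+1) := by exact_mod_cast hlt
      have h2 : ((7:ℝ))^(J+1) = 7 * 7^J := by ring
      have h3 : (0:ℝ) < (7:ℝ)^J := by positivity
      have heq : (n:ℝ) * (1/7)^J = (n:ℝ)/(7:ℝ)^J := by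
        rw [one_div, inv_pow, div_eq_mul_inv]
      rw [heq, div_le_iff₀ h3]
      nlinarith
    have hJlog : (J:ℝ) ≤ Real.log n / Real.log 7 := by
      rw [le_div_iff₀ hlog7]
      have : Real.log (7^J) ≤ Real.log n := by
        apply Real.log_le_log (by positivity)
        exact_mod_cast hpow_le
      rw [Real.log_pow] at this
      linarith [this]
    have hL1 : 1 ≤ Real.log n / Real.log 7 := by
      rw [le_div_iff₀ hlog7]
      have : Real.log 7 ≤ Real.log n := Real.log_le_log (by norm_num) (by exact_mod_cast hn7)
      linarith
    have hVr : (∑ j ∈ Finset.Icc 1 J, 2 * (n / 7^j) : ℕ) ≤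
        (padicValInt 7 (∏ k ∈ Finset.Icc 1 n, ((k:ℤ)^2 + 1) * ((k:ℤ)^2 - 2)) : ℝ) := by
      exact_mod_cast hVge
    rw [hcast] at hVr
    set L := Real.log n / Real.log 7 with hL
    have h10 : 10 * Real.log n / Real.log 7 = 10 * L := by rw [hL, mul_div_assoc]
    rw [h10]
    have hexp : 2 * (n:ℝ) * ((1 - (1/7)^J)/6) = (n:ℝ)/3 - ((n:ℝ) * (1/7)^J)/3 := by ring
    rw [hexp] at hsum_ge
    linarith

/-- For the hypergeometric sequence with `f(x) = (x²+1)(x²-2)` and `g(x) = x⁴-2x²+9`: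
`v_7(u_n) = -v_7(∏_{k=1}^n f(k))`, in particular
`v_7(u_n) ≤ -(2n/6 - 10·log n/log 7)` for `n ≥ 2`, and consequently `u` takes any fixed
rational value only finitely often. -/
theorem stmt18 (u : ℕ → ℚ) (hu0 : u 0 = 1)
    (hrec : ∀ n : ℕ, 1 ≤ n →
      (((n : ℚ) ^ 2 + 1) * ((n : ℚ) ^ 2 - 2)) * u n =
        ((n : ℚ) ^ 4 - 2 * (n : ℚ) ^ 2 + 9) * u (n - 1)) :
    (∀ n : ℕ, padicValRat 7 (u n) =
      -(padicValInt 7 (∏ k ∈ Finset.Icc 1 n, ((k : ℤ) ^ 2 + 1) * ((k : ℤ) ^ 2 - 2)) : ℤ)) ∧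
    (∀ n : ℕ, 2 ≤ n → (padicValRat 7 (u n) : ℝ) ≤
      -(2 * (n : ℝ) / 6 - 10 * Real.log n / Real.log 7)) ∧
    (∀ t : ℚ, {n : ℕ | u n = t}.Finite) := by
  have hune : ∀ n : ℕ, u n ≠ 0 := by
    intro n
    rw [u_eq u hu0 hrec n]
    apply div_ne_zero
    · exact_mod_cast Finset.prod_ne_zero_iff.2 fun k _ => Gz_ne k
    · exact_mod_cast Finset.prod_ne_zero_iff.2 fun k _ => Fz_ne k
  refine ⟨part1 u hu0 hrec, ?_, ?_⟩
  · intro n hn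
    rw [part1 u hu0 hrec n]
    push_cast
    linarith [part2real n hn]
  · intro t
    by_cases ht : t = 0
    · subst ht
      convert Set.finite_empty using 1
      ext n
      simp [hune n]
    · set c := (-padicValRat 7 t).toNat with hc
      apply Set.Finite.subset (Set.finite_Iio (7*(c+1)))
      intro n hn
      simp only [Set.mem_setOf_eq] at hn
      have hv := part1 u hu0 hrec n
      rw [hn] at hv
      set V := padicValInt 7 (∏ k ∈ Finset.Icc 1 n, ((k : ℤ) ^ 2 + 1) * ((k : ℤ) ^ 2 - 2)) with hV
      have hVc : V = c := by omega
      have hlow := val_lower n 1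
      rw [← hV] at hlow
      simp only [Finset.Icc_self, Finset.sum_singleton, pow_one] at hlow
      simp only [Set.mem_Iio]
      omega
end
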